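/- Let q ≥ 1 be an integer, let r_1,…,r_q be positive real numbers and d_1,…,d_q real numbers. Suppose the supremum, over nonzero weakly increasing vectors w ∈ ℝ^q, of Ψ(w) = −(Σ_i d_i w_i)/(Σ_i r_i w_i²)^{1/2} is attained at some strictly increasing vector w* and that Ψ(w*) > 0. Then the slopes μ_i = d_i/r_i are strictly decreasing (μ_1 > μ_2 > … > μ_q), and w* is a positive multiple of the vector (−μ_1,…,−μ_q). -/

import Mathlib

/-- If the supremum over nonzero weakly increasing vectors `w` of
`Ψ(w) = -(Σ dᵢ wᵢ)/(Σ rᵢ wᵢ²)^{1/2}` is attained at some strictly increasing vector `w*`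
with `Ψ(w*) > 0`, then the slopes `μᵢ = dᵢ/rᵢ` are strictly decreasing and `w*` is a
positive multiple of `(-μ₁, …, -μ_q)`. -/
theorem statement2 (q : ℕ) (hq : 1 ≤ q) (r d : Fin q → ℝ)
    (hr : ∀ i, 0 < r i)
    (wstar : Fin q → ℝ) (hw0 : wstar ≠ 0) (hwmono : StrictMono wstar)
    (hmax : ∀ w : Fin q → ℝ, w ≠ 0 → Monotone w →
      -(∑ i, d i * w i) / Real.sqrt (∑ i, r i * w i ^ 2) ≤
        -(∑ i, d i * wstar i) / Real.sqrt (∑ i, r i * wstar i ^ 2))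
    (hpos : 0 < -(∑ i, d i * wstar i) / Real.sqrt (∑ i, r i * wstar i ^ 2)) :
    StrictAnti (fun i : Fin q => d i / r i) ∧
    ∃ c : ℝ, 0 < c ∧ ∀ i : Fin q, wstar i = c * (-(d i / r i)) := by
  classical
  set A := ∑ i, d i * wstar i with hA_def
  set B := ∑ i, r i * wstar i ^ 2 with hB_def
  have hBpos : 0 < B := by
    obtain ⟨k, hk⟩ := Function.ne_iff.mp hw0
    have hk' : wstar k ≠ 0 := by simpa using hk
    refine Finset.sum_pos' (fun j _ => mul_nonneg (hr j).le (sq_nonneg _))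
      ⟨k, Finset.mem_univ k, mul_pos (hr k) (by positivity)⟩
  have hs : 0 < Real.sqrt B := Real.sqrt_pos.mpr hBpos
  have hAneg : A < 0 := by
    have h3 := mul_pos hpos hs
    rw [div_mul_cancel₀ _ (ne_of_gt hs)] at h3
    linarith
  -- key stationarity identity
  have key : ∀ i : Fin q, A * (r i * wstar i) = d i * B := by
    intro i
    have hδ : ∃ δ > 0, ∀ t : ℝ, |t| < δ →
        Function.update wstar i (wstar i + t) ≠ 0 ∧
        Monotone (Function.update wstar i (wstar i + t)) := by
      rcases eq_or_lt_of_le hq with hq1 | hq2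
      · -- q = 1
        have hsub : ∀ a b : Fin q, a = b := by
          intro a b
          have ha := a.isLt
          have hb := b.isLt
          exact Fin.ext (by omega)
        have hne : wstar i ≠ 0 := by
          intro h0
          apply hw0
          funext j
          rw [hsub j i, h0]
          rfl
        refine ⟨|wstar i|, abs_pos.mpr hne, fun t ht => ⟨?_, ?_⟩⟩
        · intro h0
          have h1 : wstar i + t = 0 := by
            have := congrFun h0 i
            simpa using this
          have h2 : t = -wstar i := by linarith
          rw [h2, abs_neg] at ht
          exact lt_irrefl _ ht
        · intro a b hab
          rw [hsub a b]
      · -- q ≥ 2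
        have hnt : Nontrivial (Fin q) := Fin.nontrivial_iff_two_le.mpr (by omega)
        obtain ⟨j0, hj0⟩ := exists_ne i
        have hne : (Finset.univ.erase i).Nonempty :=
          ⟨j0, Finset.mem_erase.mpr ⟨hj0, Finset.mem_univ j0⟩⟩
        refine ⟨(Finset.univ.erase i).inf' hne (fun j => |wstar j - wstar i|), ?_, ?_⟩
        · show (0:ℝ) < _
          rw [Finset.lt_inf'_iff]
          intro j hj
          have hji : j ≠ i := (Finset.mem_erase.mp hj).1
          exact abs_pos.mpr (sub_ne_zero.mpr (fun h => hji (hwmono.injective h)))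
        · intro t ht
          have key2 : ∀ j, j ≠ i → |t| < |wstar j - wstar i| := fun j hj =>
            lt_of_lt_of_le ht (Finset.inf'_le _ (Finset.mem_erase.mpr ⟨hj, Finset.mem_univ j⟩))
          have hsm : StrictMono (Function.update wstar i (wstar i + t)) := by
            intro a b hab
            have h2 : wstar a < wstar b := hwmono hab
            rw [Function.update_apply, Function.update_apply]
            split_ifs with ha hb hb
            · exact absurd (ha.trans hb.symm) (ne_of_lt hab)
            · -- a = i, b ≠ i : wstar i + t < wstar b
              have h1 := key2 b hb
              rw [ha] at h2
              rw [abs_of_pos (show (0:ℝ) < wstar b - wstar i by linarith)] at h1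
              have h4 := le_abs_self t
              linarith
            · -- a ≠ i, b = i : wstar a < wstar i + t
              have h1 := key2 a ha
              rw [hb] at h2
              rw [abs_of_neg (show wstar a - wstar i < (0:ℝ) by linarith)] at h1
              have h4 := neg_abs_le t
              linarith
            · exact h2
          refine ⟨?_, hsm.monotone⟩
          intro h0
          have h01 : (⟨0, by omega⟩ : Fin q) < ⟨1, by omega⟩ := by
            simp [Fin.lt_def]
          have := hsm h01
          rw [congrFun h0 ⟨0, by omega⟩, congrFun h0 ⟨1, by omega⟩] at this
          exact lt_irrefl _ this
    obtain ⟨δ, hδpos, hδ⟩ := hδ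
    set c1 := 2 * (r i * wstar i) with hc1
    set f : ℝ → ℝ := fun t => -(A + d i * t) / Real.sqrt (B + (c1 * t + r i * t ^ 2))
      with hf_def
    have hsum1 : ∀ t, ∑ j, d j * Function.update wstar i (wstar i + t) j = A + d i * t := by
      intro t
      have h1 : ∀ j : Fin q, d j * Function.update wstar i (wstar i + t) j
          = d j * wstar j + (if j = i then d i * t else 0) := by
        intro j
        rcases eq_or_ne j i with rfl | hj
        · simp only [Function.update_self, eq_self_iff_true, if_true]
          ring
        · simp [Function.update_of_ne hj, hj]
      rw [Finset.sum_congr rfl (fun j _ => h1 j), Finset.sum_add_distrib]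
      simp [hA_def]
    have hsum2 : ∀ t, ∑ j, r j * Function.update wstar i (wstar i + t) j ^ 2
        = B + (c1 * t + r i * t ^ 2) := by
      intro t
      have h1 : ∀ j : Fin q, r j * Function.update wstar i (wstar i + t) j ^ 2
          = r j * wstar j ^ 2 + (if j = i then c1 * t + r i * t ^ 2 else 0) := by
        intro j
        rcases eq_or_ne j i with rfl | hj
        · simp only [Function.update_self, eq_self_iff_true, if_true, hc1]
          ring
        · simp [Function.update_of_ne hj, hj]
      rw [Finset.sum_congr rfl (fun j _ => h1 j), Finset.sum_add_distrib]
      simp [hB_def]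
    have hmax0 : IsLocalMax f 0 := by
      have : ∀ᶠ t in nhds (0:ℝ), f t ≤ f 0 := by
        rw [Metric.eventually_nhds_iff]
        refine ⟨δ, hδpos, fun t ht => ?_⟩
        rw [Real.dist_eq, sub_zero] at ht
        obtain ⟨hne0, hmono⟩ := hδ t ht
        have h1 := hmax _ hne0 hmono
        have hft : f t = -(∑ j, d j * Function.update wstar i (wstar i + t) j) /
            Real.sqrt (∑ j, r j * Function.update wstar i (wstar i + t) j ^ 2) := by
          rw [hsum1 t, hsum2 t]
        have hf0 : f 0 = -A / Real.sqrt B := by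
          simp [hf_def]
        rw [hft, hf0]
        exact h1
      exact this
    have hg : HasDerivAt (fun t : ℝ => -(A + d i * t)) (-(d i)) 0 := by
      have h1 : HasDerivAt (fun t : ℝ => A + d i * t) (d i) 0 := by
        simpa using ((hasDerivAt_id (0:ℝ)).const_mul (d i)).const_add A
      exact h1.neg
    have hinner : HasDerivAt (fun t : ℝ => B + (c1 * t + r i * t ^ 2)) c1 0 := by
      have h1 : HasDerivAt (fun t : ℝ => t ^ 2) 0 (0:ℝ) := by
        simpa using hasDerivAt_pow 2 (0:ℝ)
      have h2 := (((hasDerivAt_id (0:ℝ)).const_mul c1).add (h1.const_mul (r i))).const_add B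
      simpa using h2
    have hBne : B + (c1 * 0 + r i * 0 ^ 2) ≠ 0 := by
      simpa using ne_of_gt hBpos
    have hdenom : HasDerivAt (fun t : ℝ => Real.sqrt (B + (c1 * t + r i * t ^ 2)))
        (c1 / (2 * Real.sqrt B)) 0 := by
      have h1 := hinner.sqrt hBne
      simpa using h1
    have hsne : Real.sqrt B ≠ 0 := ne_of_gt hs
    have hdenne : Real.sqrt (B + (c1 * 0 + r i * 0 ^ 2)) ≠ 0 := by
      simpa using hsne
    have hF : HasDerivAt f
        ((-(d i) * Real.sqrt B - (-A) * (c1 / (2 * Real.sqrt B))) / Real.sqrt B ^ 2) 0 := by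
      have h1 := hg.div hdenom hdenne
      exact h1.congr_deriv (by norm_num)
    have hd0 : (-(d i) * Real.sqrt B - (-A) * (c1 / (2 * Real.sqrt B))) / Real.sqrt B ^ 2
        = 0 := by
      rw [← hF.deriv]
      exact hmax0.deriv_eq_zero
    have hs2 : Real.sqrt B ^ 2 = B := Real.sq_sqrt hBpos.le
    have hnum : -(d i) * Real.sqrt B - (-A) * (c1 / (2 * Real.sqrt B)) = 0 := by
      rcases div_eq_zero_iff.mp hd0 with h | h
      · exact h
      · exact absurd h (by positivity)
    have hnum2 : -(d i) * Real.sqrt B * (2 * Real.sqrt B) - (-A) * c1 = 0 := by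
      field_simp at hnum
      linarith
    rw [hc1] at hnum2
    have h5 : -d i * Real.sqrt B * (2 * Real.sqrt B) = -2 * d i * B := by
      linear_combination (-2 * d i) * hs2
    rw [h5] at hnum2
    linarith
  have hA' : 0 < -A := by linarith
  have hrep : ∀ i : Fin q, wstar i = B / (-A) * (-(d i / r i)) := by
    intro i
    have h1 := key i
    have hAne : A ≠ 0 := ne_of_lt hAneg
    have hrne : r i ≠ 0 := ne_of_gt (hr i)
    field_simp
    nlinarith [h1]
  refine ⟨?_, B / (-A), div_pos hBpos hA', hrep⟩
  intro i j hij
  simp only []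
  have h1 := hrep i
  have h2 := hrep j
  have hw := hwmono hij
  have hri := hr i
  have hrj := hr j
  rw [div_lt_div_iff₀ hrj hri]
  rw [h1, h2] at hw
  have hc : 0 < B / (-A) := div_pos hBpos hA'
  have h3 : -(d i / r i) < -(d j / r j) := by
    by_contra h
    push_neg at h
    nlinarith
  have h4 : d j / r j < d i / r i := by linarith
  calc d j * r i = (d j / r j) * (r j * r i) := by field_simp
    _ < (d i / r i) * (r j * r i) := by
        apply mul_lt_mul_of_pos_right h4 (mul_pos hrj hri)
    _ = d i * r j := by field_simp
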